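/- The series Σₙ Σ_{|ν|=n} n!·P_ν(x), evaluated at q = (1/3)(i+j+k), has Euclidean norm ‖q‖ = 1/√3 < 1, yet the series diverges at q: each homogeneous degree-n term evaluates to a sum with total absolute value Σ_{|ν|=n} (n!/(n₁!n₂!n₃!))·(1/3)ⁿ = 1, so the partial sums do not converge. -/

import Mathlib

open Quaternion Filter
open scoped Classical

noncomputable def qn' (x : ℍ[ℝ]) : ℝ :=
  max (max (Real.sqrt (x.re ^ 2 + x.imI ^ 2)) (Real.sqrt (x.re ^ 2 + x.imJ ^ 2)))
    (Real.sqrt (x.re ^ 2 + x.imK ^ 2))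

/-- Fueter variables ζ₁(x)=x₁−ix₀, ζ₂(x)=x₂−jx₀, ζ₃(x)=x₃−kx₀. -/
noncomputable def zeta : Fin 3 → ℍ[ℝ] → ℍ[ℝ]
  | 0, x => ⟨x.imI, -x.re, 0, 0⟩
  | 1, x => ⟨x.imJ, 0, -x.re, 0⟩
  | 2, x => ⟨x.imK, 0, 0, -x.re⟩

/-- The set A_ν of words of length n with ν t letters t. -/
noncomputable def words (n : ℕ) (ν : Fin 3 → ℕ) : Finset (Fin n → Fin 3) :=
  Finset.univ.filter fun w => ∀ t : Fin 3, (Finset.univ.filter fun s => w s = t).card = ν t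

/-- The ordered product ζ_{i₁}(x)⋯ζ_{iₙ}(x) along a word. -/
noncomputable def wprod {n : ℕ} (w : Fin n → Fin 3) (x : ℍ[ℝ]) : ℍ[ℝ] :=
  ((List.ofFn w).map fun t => zeta t x).prod

/-- The symmetric homogeneous hyperholomorphic polynomial P_ν. -/
noncomputable def Pnu (n : ℕ) (ν : Fin 3 → ℕ) (x : ℍ[ℝ]) : ℍ[ℝ] :=
  ((n.factorial : ℝ)⁻¹) • ∑ w ∈ words n ν, wprod w x

/-- Partial sums of the Taylor series Σₙ Σ_{|ν|=n} P_ν(x)·a_ν. -/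
noncomputable def taylorPartial (a : (Fin 3 → ℕ) → ℍ[ℝ]) (N : ℕ) (x : ℍ[ℝ]) : ℍ[ℝ] :=
  ∑ n ∈ Finset.range N, ∑ ν ∈ Finset.Nat.antidiagonalTuple 3 n, Pnu n ν x * a ν
/-- The point q = (i+j+k)/3. -/
noncomputable def qpt : ℍ[ℝ] := ⟨0, 3⁻¹, 3⁻¹, 3⁻¹⟩

lemma zeta_qpt (t : Fin 3) : zeta t qpt = ((3⁻¹ : ℝ) : ℍ[ℝ]) := by
  have h : ((3⁻¹ : ℝ) : ℍ[ℝ]) = ⟨3⁻¹, 0, 0, 0⟩ := rfl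
  fin_cases t <;> · rw [h]; ext <;> simp [zeta, qpt]

lemma wprod_qpt {n : ℕ} (w : Fin n → Fin 3) :
    wprod w qpt = ((3⁻¹ : ℝ) : ℍ[ℝ]) ^ n := by
  unfold wprod
  rw [List.map_congr_left (fun t _ => zeta_qpt t), List.map_const', List.length_ofFn,
    List.prod_replicate]

lemma words_eq_fiber (n : ℕ) (ν : Fin 3 → ℕ) :
    words n ν = Finset.univ.filter
      (fun w => (fun t => (Finset.univ.filter fun s => w s = t).card) = ν) := by
  ext w; simp [words, funext_iff]

lemma card_words_sum (n : ℕ) :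
    ∑ ν ∈ Finset.Nat.antidiagonalTuple 3 n, ((words n ν).card : ℝ) = 3 ^ n := by
  have key := Finset.card_eq_sum_card_fiberwise
    (s := (Finset.univ : Finset (Fin n → Fin 3)))
    (t := Finset.Nat.antidiagonalTuple 3 n)
    (f := fun w => fun t => (Finset.univ.filter fun s => w s = t).card)
    (fun w _ => by
      rw [Finset.mem_coe, Finset.Nat.mem_antidiagonalTuple]
      have := Finset.card_eq_sum_card_fiberwise
        (s := (Finset.univ : Finset (Fin n))) (t := (Finset.univ : Finset (Fin 3)))
        (f := w) (fun s _ => Finset.mem_coe.2 (Finset.mem_univ _))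
      simpa using this.symm)
  have hcard : (Finset.univ : Finset (Fin n → Fin 3)).card = 3 ^ n := by simp
  have : ∑ ν ∈ Finset.Nat.antidiagonalTuple 3 n, (words n ν).card = 3 ^ n := by
    rw [← hcard, key]
    exact Finset.sum_congr rfl fun ν _ => by rw [words_eq_fiber]
  exact_mod_cast congrArg (Nat.cast : ℕ → ℝ) this

lemma block (n : ℕ) (ν : Fin 3 → ℕ) :
    (n.factorial : ℝ) • Pnu n ν qpt
      = ((((words n ν).card : ℝ) * (3 : ℝ)⁻¹ ^ n : ℝ) : ℍ[ℝ]) := by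
  unfold Pnu
  rw [smul_smul, mul_inv_cancel₀ (by exact_mod_cast n.factorial_ne_zero), one_smul,
    Finset.sum_congr rfl (fun w _ => wprod_qpt w), Finset.sum_const, nsmul_eq_mul]
  push_cast
  ring

/-- At q = (i+j+k)/3 we have ‖q‖ = 1/√3 < 1, each homogeneous degree-n block of the
series Σₙ Σ_{|ν|=n} n!·P_ν has total absolute value 1, and the series diverges at q. -/
theorem series_diverges_inside_euclidean_ball :
    ‖qpt‖ = 1 / Real.sqrt 3 ∧ 1 / Real.sqrt 3 < 1 ∧
    (∀ n : ℕ, ∑ ν ∈ Finset.Nat.antidiagonalTuple 3 n,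
        ‖(n.factorial : ℝ) • Pnu n ν qpt‖ = 1) ∧
    ¬ ∃ L : ℍ[ℝ], Filter.Tendsto (fun N => ∑ n ∈ Finset.range N,
        ∑ ν ∈ Finset.Nat.antidiagonalTuple 3 n,
          (n.factorial : ℝ) • Pnu n ν qpt) atTop (nhds L) := by
  refine ⟨?_, ?_, ?_, ?_⟩
  · rw [norm_eq_sqrt_real_inner, Quaternion.inner_self]
    have : normSq qpt = 3⁻¹ := by
      rw [Quaternion.normSq_def']; norm_num [qpt]
    rw [this, Real.sqrt_inv, one_div]
  · rw [div_lt_one (by positivity)]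
    rw [show (1:ℝ) = Real.sqrt 1 from (Real.sqrt_one).symm]
    exact Real.sqrt_lt_sqrt (by norm_num) (by norm_num)
  · intro n
    have : ∀ ν ∈ Finset.Nat.antidiagonalTuple 3 n,
        ‖(n.factorial : ℝ) • Pnu n ν qpt‖ = ((words n ν).card : ℝ) * (3 : ℝ)⁻¹ ^ n := by
      intro ν _
      rw [block, Quaternion.norm_coe, Real.norm_of_nonneg (by positivity)]
    rw [Finset.sum_congr rfl this, ← Finset.sum_mul, card_words_sum, ← mul_pow]
    norm_num
  · have hbs : ∀ n : ℕ, ∑ ν ∈ Finset.Nat.antidiagonalTuple 3 n,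
        (n.factorial : ℝ) • Pnu n ν qpt = 1 := by
      intro n
      rw [Finset.sum_congr rfl fun ν _ => block n ν]
      have : ∑ ν ∈ Finset.Nat.antidiagonalTuple 3 n,
          ((((words n ν).card : ℝ) * (3 : ℝ)⁻¹ ^ n : ℝ) : ℍ[ℝ])
          = (((∑ ν ∈ Finset.Nat.antidiagonalTuple 3 n,
              ((words n ν).card : ℝ) * (3 : ℝ)⁻¹ ^ n : ℝ)) : ℍ[ℝ]) := by
        rw [show ((Quaternion.coe : ℝ → ℍ[ℝ])) = ⇑(algebraMap ℝ ℍ[ℝ]) from (Quaternion.algebraMap_def).symm]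
        exact (map_sum (algebraMap ℝ ℍ[ℝ]) _ _).symm
      rw [this, ← Finset.sum_mul, card_words_sum, ← mul_pow]
      norm_num
    rintro ⟨L, hL⟩
    have hseq : (fun N => ∑ n ∈ Finset.range N, ∑ ν ∈ Finset.Nat.antidiagonalTuple 3 n,
        (n.factorial : ℝ) • Pnu n ν qpt) = fun N : ℕ => ((N : ℝ) : ℍ[ℝ]) := by
      funext N; simp [hbs]; norm_cast
    rw [hseq] at hL
    have h1 : Tendsto (fun N : ℕ => (N : ℝ)) atTop (nhds ‖L‖) := by
      have := hL.norm
      simpa [Quaternion.norm_coe] using this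
    exact not_tendsto_nhds_of_tendsto_atTop tendsto_natCast_atTop_atTop _ h1
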